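/- Let V be a real inner product space, let u, m be real numbers with u > 0 and u + m < 1, and let p, q ∈ V. Then u(1 − u − m)·‖p/u + (p + q)/(1 − u − m)‖² ≥ ‖p‖² − ‖q‖². -/

import Mathlib

/-- Pointwise dissipation inequality: with `p = ∇u`, `q = ∇m` and
`∇w = p/u + (p+q)/(1−u−m)`, the dissipation density `u(1−u−m)|∇w|²`
dominates `|p|² − |q|²`. -/
theorem dissipation_dominates {V : Type*} [NormedAddCommGroup V]
    [InnerProductSpace ℝ V] (u m : ℝ) (hu : 0 < u) (hum : u + m < 1)
    (p q : V) :
    u * (1 - u - m) * ‖(1 / u) • p + (1 / (1 - u - m)) • (p + q)‖ ^ 2 ≥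
      ‖p‖ ^ 2 - ‖q‖ ^ 2 := by
  set b : ℝ := 1 - u - m with hb
  have hbpos : 0 < b := by simp only [hb]; linarith
  have h1 : ‖(1 / u) • p + (1 / b) • (p + q)‖ ^ 2
      = (1 / u) ^ 2 * ‖p‖ ^ 2
        + 2 * ((1 / u) * ((1 / b) * inner ℝ p (p + q)))
        + (1 / b) ^ 2 * ‖p + q‖ ^ 2 := by
    rw [norm_add_sq_real, norm_smul, norm_smul, real_inner_smul_left,
      real_inner_smul_right, Real.norm_eq_abs, Real.norm_eq_abs,
      abs_of_pos (by positivity : (0:ℝ) < 1 / u),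
      abs_of_pos (by positivity : (0:ℝ) < 1 / b)]
    ring
  have h2 : (inner ℝ p (p + q) : ℝ) = ‖p‖ ^ 2 + inner ℝ p q := by
    rw [inner_add_right, real_inner_self_eq_norm_sq]
  have h3 : ‖p + q‖ ^ 2 = ‖p‖ ^ 2 + 2 * (inner ℝ p q : ℝ) + ‖q‖ ^ 2 :=
    norm_add_sq_real p q
  have hu' : u ≠ 0 := ne_of_gt hu
  have hb' : b ≠ 0 := ne_of_gt hbpos
  rw [h1, h2]
  rw [ge_iff_le, ← sub_nonneg]
  have key : u * b * ((1 / u) ^ 2 * ‖p‖ ^ 2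
        + 2 * ((1 / u) * ((1 / b) * (‖p‖ ^ 2 + inner ℝ p q)))
        + (1 / b) ^ 2 * ‖p + q‖ ^ 2) - (‖p‖ ^ 2 - ‖q‖ ^ 2)
      = (b / u) * ‖p‖ ^ 2 + (u / b) * ‖p + q‖ ^ 2 + ‖p + q‖ ^ 2 := by
    rw [h3]; field_simp; ring
  rw [key]
  positivity
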